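/- The relation ∼ on the set of triples (c, κ, a) with c ∈ C³(G, U(1)⊕U(1)), κ ∈ C²(G, ℤ₂⊕ℤ₂), a ∈ Hom(G, ℤ₂) satisfying d_a²κ = 0 and d_a³c(g,h,k,f) = (−1)^{κ(g,h)·κ^{a(gh)}(k,f)}, defined by (c⁽¹⁾,κ⁽¹⁾,a⁽¹⁾) ∼ (c⁽²⁾,κ⁽²⁾,a⁽²⁾) iff a⁽¹⁾=a⁽²⁾=:a and there exist m ∈ C¹(G,ℤ₂⊕ℤ₂), σ ∈ C²(G,U(1)⊕U(1)) with κ⁽²⁾ = d_a¹m + κ⁽¹⁾ and c⁽²⁾(g,h,k) = (−1)^{κ⁽¹⁾(g,h)·m^{a(gh)}(k)}·(−1)^{m(g)·(κ⁽²⁾)^{a(g)}(h,k)}·(d_a²σ)(g,h,k)·c⁽¹⁾(g,h,k), is an equivalence relation. -/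

import Mathlib

/-- The swap action of `ZMod 2` on `A ⊕ A`. -/
def swapP {A : Type*} (t : ZMod 2) (x : A × A) : A × A :=
  if t = 0 then x else (x.2, x.1)

/-- `-1` as an element of the circle group `U(1)`. -/
noncomputable def neg1 : Circle :=
  ⟨-1, by rw [Submonoid.unitSphere]; simp [mem_sphere_zero_iff_norm]⟩

/-- `(-1)^t ∈ U(1)` for `t ∈ ℤ₂`. -/
noncomputable def sgn (t : ZMod 2) : Circle := neg1 ^ t.val

/-- Componentwise `(-1)^x ∈ U(1) ⊕ U(1)` for `x ∈ ℤ₂ ⊕ ℤ₂`. -/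
noncomputable def sgn2 (x : ZMod 2 × ZMod 2) : Circle × Circle := (sgn x.1, sgn x.2)

/-- Twisted degree-1 differential on `ℤ₂ ⊕ ℤ₂`-valued 1-cochains. -/
def ad1 {G : Type*} [Group G] (a : G → ZMod 2) (m : G → ZMod 2 × ZMod 2) :
    G → G → ZMod 2 × ZMod 2 :=
  fun g h => swapP (a g) (m h) + m g - m (g * h)

/-- Twisted degree-2 differential on `ℤ₂ ⊕ ℤ₂`-valued 2-cochains. -/
def ad2 {G : Type*} [Group G] (a : G → ZMod 2) (y : G → G → ZMod 2 × ZMod 2) :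
    G → G → G → ZMod 2 × ZMod 2 :=
  fun g h k => swapP (a g) (y h k) + y g (h * k) - y (g * h) k - y g h

/-- Twisted degree-2 differential on `U(1) ⊕ U(1)`-valued 2-cochains. -/
def d2 {G A : Type*} [Group G] [CommGroup A] (a : G → ZMod 2)
    (y : G → G → A × A) : G → G → G → A × A :=
  fun g h k => swapP (a g) (y h k) * y g (h * k) * (y (g * h) k)⁻¹ * (y g h)⁻¹

/-- Twisted degree-3 differential on `U(1) ⊕ U(1)`-valued 3-cochains. -/
def d3 {G A : Type*} [Group G] [CommGroup A] (a : G → ZMod 2)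
    (z : G → G → G → A × A) : G → G → G → G → A × A :=
  fun g h k f =>
    swapP (a g) (z h k f) * z g (h * k) f * z g h k * (z (g * h) k f)⁻¹ * (z g h (k * f))⁻¹

/-- The cocycle-type conditions defining `\widetilde{PD}_0(G)`:
`d_a² κ = 0` and `d_a³ c(g,h,k,f) = (-1)^{κ(g,h)·κ^{a(gh)}(k,f)}`. -/
def PDCond {G : Type*} [Group G] (a : G → ZMod 2)
    (c : G → G → G → Circle × Circle) (κ : G → G → ZMod 2 × ZMod 2) : Prop :=
  (∀ g h k : G, ad2 a κ g h k = 0) ∧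
  (∀ g h k f : G, d3 a c g h k f = sgn2 (κ g h * swapP (a (g * h)) (κ k f)))

/-- A triple `(c, κ, a)` as in the definition of `\widetilde{PD}_0(G)`. -/
def Triple (G : Type*) [Group G] :=
  (G → G → G → Circle × Circle) × (G → G → ZMod 2 × ZMod 2) × (G → ZMod 2)

/-- The relation `∼_{PD_0(G)}` on triples `(c, κ, a)`. -/
def PDRel {G : Type*} [Group G] (p q : Triple G) : Prop :=
  p.2.2 = q.2.2 ∧
  ∃ (m : G → ZMod 2 × ZMod 2) (σ : G → G → Circle × Circle),
    (∀ g h : G, q.2.1 g h = ad1 p.2.2 m g h + p.2.1 g h) ∧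
    (∀ g h k : G,
      q.1 g h k =
        sgn2 (p.2.1 g h * swapP (p.2.2 (g * h)) (m k)) *
          sgn2 (m g * swapP (p.2.2 g) (q.2.1 h k)) *
          d2 p.2.2 σ g h k * p.1 g h k)

lemma ZMod2_cases : ∀ t : ZMod 2, t = 0 ∨ t = 1 := by decide

section swapLemmas
variable {A : Type*}

lemma swapP_zt (x : A × A) : swapP 0 x = x := by simp [swapP]

lemma swapP_ot (x : A × A) : swapP 1 x = (x.2, x.1) := by
  simp [swapP, show (1:ZMod 2) ≠ 0 by decide]

lemma swapP_add [Add A] (t : ZMod 2) (x y : A × A) :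
    swapP t (x + y) = swapP t x + swapP t y := by
  rcases ZMod2_cases t with ht|ht <;> subst ht <;> simp [swapP_zt, swapP_ot]

lemma swapP_neg [Neg A] (t : ZMod 2) (x : A × A) : swapP t (-x) = -swapP t x := by
  rcases ZMod2_cases t with ht|ht <;> subst ht <;> simp [swapP_zt, swapP_ot]

lemma swapP_mul [Mul A] (t : ZMod 2) (x y : A × A) :
    swapP t (x * y) = swapP t x * swapP t y := by
  rcases ZMod2_cases t with ht|ht <;> subst ht <;> simp [swapP_zt, swapP_ot]

lemma swapP_inv [Inv A] (t : ZMod 2) (x : A × A) : swapP t x⁻¹ = (swapP t x)⁻¹ := by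
  rcases ZMod2_cases t with ht|ht <;> subst ht <;> simp [swapP_zt, swapP_ot]

lemma swapP_zero [Zero A] (t : ZMod 2) : swapP t (0 : A × A) = 0 := by
  rcases ZMod2_cases t with ht|ht <;> subst ht <;> simp [swapP_zt, swapP_ot]

lemma swapP_one [One A] (t : ZMod 2) : swapP t (1 : A × A) = 1 := by
  rcases ZMod2_cases t with ht|ht <;> subst ht <;> simp [swapP_zt, swapP_ot]

end swapLemmas

lemma neg1_sq : neg1 * neg1 = 1 := Subtype.ext (by show (-1:ℂ) * (-1) = 1; norm_num)

lemma sgn_add (t u : ZMod 2) : sgn (t + u) = sgn t * sgn u := by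
  rcases ZMod2_cases t with ht|ht <;> rcases ZMod2_cases u with hu|hu <;>
    subst ht <;> subst hu <;>
    simp [sgn, show (1+1:ZMod 2) = 0 by decide, show (0:ZMod 2).val = 0 from rfl,
      show (1:ZMod 2).val = 1 from rfl, neg1_sq]

lemma sgn_neg (t : ZMod 2) : sgn (-t) = (sgn t)⁻¹ := by
  rcases ZMod2_cases t with ht|ht <;> subst ht
  · rw [neg_zero]
    simp [sgn, show (0:ZMod 2).val = 0 from rfl]
  · rw [show (-1:ZMod 2) = 1 by decide]
    rw [show sgn 1 = neg1 by simp [sgn, show (1:ZMod 2).val = 1 from rfl]]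
    exact eq_inv_of_mul_eq_one_left neg1_sq

lemma sgn2_add (x y : ZMod 2 × ZMod 2) : sgn2 (x + y) = sgn2 x * sgn2 y := by
  simp [sgn2, sgn_add, Prod.ext_iff]

lemma sgn2_neg (x : ZMod 2 × ZMod 2) : sgn2 (-x) = (sgn2 x)⁻¹ := by
  show (sgn (-x.1), sgn (-x.2)) = (sgn x.1, sgn x.2)⁻¹; rw [sgn_neg, sgn_neg]; rfl

lemma sgn2_sub (x y : ZMod 2 × ZMod 2) : sgn2 (x - y) = sgn2 x * (sgn2 y)⁻¹ := by
  rw [sub_eq_add_neg, sgn2_add, sgn2_neg]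

lemma sgn2_zero : sgn2 0 = 1 := by
  simp [sgn2, sgn, show (0:ZMod 2).val = 0 from rfl, Prod.ext_iff]

lemma sgn2_swapP (t : ZMod 2) (x : ZMod 2 × ZMod 2) :
    sgn2 (swapP t x) = swapP t (sgn2 x) := by
  rcases ZMod2_cases t with ht|ht <;> subst ht <;> simp [swapP_zt, swapP_ot, sgn2]

section diffLemmas
variable {G : Type*} [Group G] {B : Type*} [CommGroup B]

lemma d2_mul (a : G → ZMod 2) (σ τ : G → G → B × B) (g h k : G) :
    d2 a (fun x y => σ x y * τ x y) g h k = d2 a σ g h k * d2 a τ g h k := by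
  simp only [d2, swapP_mul, mul_inv]
  simp [mul_comm, mul_left_comm, mul_assoc]

lemma d2_inv (a : G → ZMod 2) (σ : G → G → B × B) (g h k : G) :
    d2 a (fun x y => (σ x y)⁻¹) g h k = (d2 a σ g h k)⁻¹ := by
  simp only [d2, swapP_inv, mul_inv, inv_inv]

lemma d2_sgn2 (a : G → ZMod 2) (q : G → G → ZMod 2 × ZMod 2) (g h k : G) :
    d2 a (fun x y => sgn2 (q x y)) g h k = sgn2 (ad2 a q g h k) := by
  simp only [d2, ad2, sgn2_sub, sgn2_add, sgn2_swapP]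

lemma d2_inv_mul_sgn2 (a : G → ZMod 2) (σ : G → G → Circle × Circle)
    (q : G → G → ZMod 2 × ZMod 2) (g h k : G) :
    d2 a (fun x y => (σ x y)⁻¹ * sgn2 (q x y)) g h k
      = (d2 a σ g h k)⁻¹ * sgn2 (ad2 a q g h k) := by
  rw [d2_mul a (fun x y => (σ x y)⁻¹) (fun x y => sgn2 (q x y)), d2_inv, d2_sgn2]

lemma d2_mul_mul_sgn2 (a : G → ZMod 2) (σ τ : G → G → Circle × Circle)
    (q : G → G → ZMod 2 × ZMod 2) (g h k : G) :
    d2 a (fun x y => σ x y * (τ x y * sgn2 (q x y))) g h k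
      = d2 a σ g h k * (d2 a τ g h k * sgn2 (ad2 a q g h k)) := by
  rw [d2_mul a σ (fun x y => τ x y * sgn2 (q x y)),
    d2_mul a τ (fun x y => sgn2 (q x y)), d2_sgn2]

lemma ad1_add (a : G → ZMod 2) (m n : G → ZMod 2 × ZMod 2) (g h : G) :
    ad1 a (fun x => m x + n x) g h = ad1 a m g h + ad1 a n g h := by
  simp only [ad1, swapP_add]; abel

lemma ad1_neg (a : G → ZMod 2) (m : G → ZMod 2 × ZMod 2) (g h : G) :
    ad1 a (fun x => -(m x)) g h = -(ad1 a m g h) := by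
  simp only [ad1, swapP_neg]; abel

end diffLemmas

lemma cancel_aux {M : Type*} [CommGroup M] (s1 s2 s3 s4 s5 d p : M)
    (h : s1 * s2 * s3 * (s4 * s5) = 1) :
    p = s1 * s2 * (d⁻¹ * s3) * (s4 * s5 * d * p) := by
  have e : s1 * s2 * (d⁻¹ * s3) * (s4 * s5 * d * p)
      = (s1 * s2 * s3 * (s4 * s5)) * ((d⁻¹ * d) * p) := by
    simp [mul_comm, mul_left_comm, mul_assoc]
  rw [e, h, inv_mul_cancel, one_mul, one_mul]

lemma trans_aux {M : Type*} [CommGroup M] (s1 s2 s3 s4 t1 t2 t5 D1 D2 p : M)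
    (h : s1 * s2 * (s3 * s4) = t1 * t2 * t5) :
    s1 * s2 * D2 * (s3 * s4 * D1 * p) = t1 * t2 * (D1 * (D2 * t5)) * p := by
  have e1 : s1 * s2 * D2 * (s3 * s4 * D1 * p)
      = (s1 * s2 * (s3 * s4)) * (D1 * D2 * p) := by
    simp [mul_comm, mul_left_comm, mul_assoc]
  rw [e1, h]
  simp [mul_comm, mul_left_comm, mul_assoc]

set_option maxHeartbeats 3200000 in
/-- the relation `∼_{PD_0(G)}` on triples `(c, κ, a)` satisfying the
cocycle conditions (with `a` a homomorphism) is an equivalence relation. -/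
theorem stmt2 {G : Type*} [Group G] [Fintype G] :
    Equivalence (fun p q :
        {t : Triple G //
          (∀ g h, t.2.2 (g * h) = t.2.2 g + t.2.2 h) ∧ PDCond t.2.2 t.1 t.2.1} =>
      PDRel p.val q.val) := by
  constructor
  · -- reflexivity
    intro p
    refine ⟨rfl, fun _ => 0, fun _ _ => 1, fun g h => ?_, fun g h k => ?_⟩
    · simp [ad1, swapP_zero]
    · simp [d2, swapP_one, sgn2_zero, swapP_zero]
  · -- symmetry
    rintro p q ⟨ha, m, σ, hκ, hc⟩
    refine ⟨ha.symm, fun g => -(m g),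
      fun x y => (σ x y)⁻¹ * sgn2 (m x * swapP (p.val.2.2 x) (m y)),
      fun g h => ?_, fun g h k => ?_⟩
    · rw [← ha, hκ g h, ad1_neg]; abel
    · rw [← ha, d2_inv_mul_sgn2, hc g h k]
      refine cancel_aux _ _ _ _ _ _ _ ?_
      simp only [← sgn2_add]
      rw [← sgn2_zero]
      congr 1
      rw [hκ g h, hκ h k]
      have hh := p.prop.1
      simp only [ad1, ad2, hh]
      generalize p.val.2.2 g = t
      generalize p.val.2.2 h = u
      rcases ZMod2_cases t with ht|ht <;> rcases ZMod2_cases u with hu|hu <;>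
        subst ht <;> subst hu <;>
        simp only [show ((1:ZMod 2)+1) = 0 by decide, zero_add, add_zero,
          swapP_zt, swapP_ot] <;>
        simp [Prod.ext_iff] <;>
        constructor <;> (ring_nf <;> simp [show (2:ZMod 2) = 0 by decide])
  · -- transitivity
    rintro p q r ⟨ha1, m1, σ1, hκ1, hc1⟩ ⟨ha2, m2, σ2, hκ2, hc2⟩
    rw [← ha1] at hκ2 hc2
    refine ⟨ha1.trans ha2, fun x => m1 x + m2 x,
      fun x y => σ1 x y * (σ2 x y * sgn2 (m1 x * swapP (p.val.2.2 x) (m2 y))),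
      fun g h => ?_, fun g h k => ?_⟩
    · rw [hκ2 g h, hκ1 g h, ad1_add]; abel
    · rw [hc2 g h k, hc1 g h k, d2_mul_mul_sgn2]
      refine trans_aux _ _ _ _ _ _ _ _ _ _ ?_
      simp only [← sgn2_add]
      congr 1
      rw [hκ2 h k, hκ1 g h, hκ1 h k]
      have hh := p.prop.1
      simp only [ad1, ad2, hh]
      generalize p.val.2.2 g = t
      generalize p.val.2.2 h = u
      rcases ZMod2_cases t with ht|ht <;> rcases ZMod2_cases u with hu|hu <;>
        subst ht <;> subst hu <;>
        simp only [show ((1:ZMod 2)+1) = 0 by decide, zero_add, add_zero,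
          swapP_zt, swapP_ot] <;>
        simp [Prod.ext_iff] <;>
        constructor <;> ring
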